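/- arXiv:math/0011102 — 2 statements merged into one kernel-verified Lean document; each statement's English description precedes it below -/
import Mathlib

section
/- Let L be a field with a discrete valuation v: L → ℤ ∪ {∞}, let q ≥ 2 and r ≥ 1 be integers, and let a_0, a_1, …, a_r ∈ L with a_r ≠ 0. Define f: L → L by f(x) = a_0 x + a_1 x^q + … + a_r x^{q^r}. Suppose v(a_r) ≤ 0 and α ∈ L satisfies v(α) < 0 and v(α) < (v(a_i) − v(a_r))/(q^r − q^i) for every 0 ≤ i < r. Then the sequence n ↦ −min{0, v(f^{∘n}(α))}/q^{nr} converges as n → ∞ to −(v(α) + v(a_r)/(q^r − 1)), and this limit is at least 1. -/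
/-- Let `v : L → ℤ ∪ {∞}` be a discrete valuation on a field `L`, `q ≥ 2`, `r ≥ 1`, and
`f(x) = a₀x + a₁x^q + ⋯ + a_r x^{q^r}` with `a_r ≠ 0`.  Suppose `v(a_r) ≤ 0`, `v(α) < 0` and
`v(α) < (v(aᵢ) − v(a_r))/(q^r − q^i)` for every `0 ≤ i < r` (stated below in the equivalent
cross-multiplied form `(q^r − q^i)·v(α) + v(a_r) < v(aᵢ)`).  Then the sequence
`n ↦ −min{0, v(f^{∘n}(α))}/q^{nr}` converges to `−(v(α) + v(a_r)/(q^r − 1))`, which is `≥ 1`. -/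
theorem valuation_local_height_limit {L : Type*} [Field L] (v : L → WithTop ℤ)
    (hv_surj : Function.Surjective v)
    (hv_zero : ∀ x, v x = ⊤ ↔ x = 0)
    (hv_mul : ∀ x y, v (x * y) = v x + v y)
    (hv_add : ∀ x y, min (v x) (v y) ≤ v (x + y))
    (q r : ℕ) (hq : 2 ≤ q) (hr : 1 ≤ r)
    (a : ℕ → L) (har : a r ≠ 0)
    (f : L → L) (hf : ∀ x, f x = ∑ i ∈ Finset.range (r + 1), a i * x ^ q ^ i)
    (hvar : v (a r) ≤ 0)
    (α : L) (hα0 : v α < 0)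
    (hα : ∀ i < r,
      (((q : ℤ) ^ r - (q : ℤ) ^ i : ℤ) : WithTop ℤ) * v α + v (a r) < v (a i)) :
    Filter.Tendsto
      (fun n : ℕ => -(((min 0 (v (f^[n] α))).untopD 0 : ℤ) : ℝ) / (q : ℝ) ^ (n * r))
      Filter.atTop
      (nhds (-((((v α).untopD 0 : ℤ) : ℝ) +
        (((v (a r)).untopD 0 : ℤ) : ℝ) / ((q : ℝ) ^ r - 1)))) ∧
    (1 : ℝ) ≤ -((((v α).untopD 0 : ℤ) : ℝ) +
      (((v (a r)).untopD 0 : ℤ) : ℝ) / ((q : ℝ) ^ r - 1)) := by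
  -- basic facts about v
  have hv0 : v 0 = ⊤ := (hv_zero 0).mpr rfl
  have hv1 : v 1 = 0 := by
    have h1 : v 1 ≠ ⊤ := fun h => one_ne_zero ((hv_zero 1).mp h)
    obtain ⟨u, hu⟩ := WithTop.ne_top_iff_exists.mp h1
    have := hv_mul 1 1
    rw [mul_one, ← hu, ← WithTop.coe_add, WithTop.coe_inj] at this
    rw [← hu]
    have : u = 0 := by omega
    simp [this]
  have hvneg : ∀ x : L, v (-x) = v x := by
    intro x
    have hm1 : v (-1 : L) = 0 := by
      have h1 : v (-1 : L) ≠ ⊤ := fun h => by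
        have := (hv_zero (-1)).mp h; norm_num at this
      obtain ⟨u, hu⟩ := WithTop.ne_top_iff_exists.mp h1
      have := hv_mul (-1 : L) (-1)
      rw [neg_mul_neg, one_mul, hv1, ← hu, ← WithTop.coe_add] at this
      have : u + u = 0 := by exact_mod_cast this.symm
      rw [← hu]
      have : u = 0 := by omega
      simp [this]
    calc v (-x) = v ((-1) * x) := by ring_nf
    _ = 0 + v x := by rw [hv_mul, hm1]
    _ = v x := by rw [zero_add]
  -- strict ultrametric
  have hlt : ∀ x y : L, v x < v y → v (x + y) = v x := by
    intro x y h
    have hge : v x ≤ v (x + y) := by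
      have := hv_add x y
      rwa [min_eq_left h.le] at this
    have h2 : min (v (x + y)) (v y) ≤ v x := by
      have h3 := hv_add (x + y) (-y)
      rw [hvneg] at h3
      have hxy : x + y + -y = x := by ring
      rwa [hxy] at h3
    have hle : v (x + y) ≤ v x := by
      rcases le_total (v (x + y)) (v y) with h4 | h4
      · rwa [min_eq_left h4] at h2
      · rw [min_eq_right h4] at h2
        exact absurd (h.trans_le h2) (lt_irrefl _)
    exact le_antisymm hle hge
  -- sum lemma
  have hsum : ∀ (s : Finset ℕ) (g : ℕ → L) (t : WithTop ℤ), t < ⊤ →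
      (∀ i ∈ s, t < v (g i)) → t < v (∑ i ∈ s, g i) := by
    intro s g t ht
    induction s using Finset.induction_on with
    | empty => intro _; simpa [hv0] using ht
    | insert b s' hx ih =>
      intro hall
      rw [Finset.sum_insert hx]
      have h1 : t < v (g b) := hall b (Finset.mem_insert_self _ _)
      have h2 : t < v (∑ i ∈ s', g i) := ih fun i hi => hall i (Finset.mem_insert_of_mem hi)
      exact lt_of_lt_of_le (lt_min h1 h2) (hv_add _ _)
  -- powers
  have hpow : ∀ (x : L) (m : ℤ), v x = (m : WithTop ℤ) →
      ∀ n : ℕ, v (x ^ n) = ((n * m : ℤ) : WithTop ℤ) := by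
    intro x m hx n
    induction n with
    | zero => simp [hv1]
    | succ k ih =>
      rw [pow_succ, hv_mul, ih, hx, ← WithTop.coe_add]
      have hz : ((k : ℤ) * m + m : ℤ) = (((k + 1 : ℕ) : ℤ) * m : ℤ) := by push_cast; ring
      rw [hz]
  -- constants
  have hαne : v α ≠ ⊤ := fun h => absurd (h ▸ hα0) (by simp)
  obtain ⟨A0, hA⟩ := WithTop.ne_top_iff_exists.mp hαne
  have hBne : v (a r) ≠ ⊤ := fun h => har ((hv_zero _).mp h)
  obtain ⟨B0, hB⟩ := WithTop.ne_top_iff_exists.mp hBne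
  have hA0 : A0 < 0 := by
    have := hα0; rw [← hA] at this; exact_mod_cast this
  have hB0 : B0 ≤ 0 := by
    have := hvar; rw [← hB] at this; exact_mod_cast this
  -- key step
  have hkey : ∀ (m : ℤ), m ≤ A0 → ∀ x : L, v x = (m : WithTop ℤ) →
      v (f x) = (((q : ℤ) ^ r * m + B0 : ℤ) : WithTop ℤ) := by
    intro m hm x hx
    set t : ℤ := (q : ℤ) ^ r * m + B0 with ht
    have hbig : v (a r * x ^ q ^ r) = ((t : ℤ) : WithTop ℤ) := by
      rw [hv_mul, ← hB, hpow x m hx (q ^ r), ← WithTop.coe_add]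
      congr 1
      push_cast
      ring
    have hsmall : ∀ i ∈ Finset.range r, ((t : ℤ) : WithTop ℤ) < v (a i * x ^ q ^ i) := by
      intro i hi
      have hir : i < r := Finset.mem_range.mp hi
      by_cases hai : a i = 0
      · rw [hai, zero_mul, hv0]; exact WithTop.coe_lt_top _
      · obtain ⟨b, hb⟩ := WithTop.ne_top_iff_exists.mp (fun h => hai ((hv_zero _).mp h))
        have hterm : v (a i * x ^ q ^ i) = ((b + (q : ℤ) ^ i * m : ℤ) : WithTop ℤ) := by
          rw [hv_mul, ← hb, hpow x m hx (q ^ i), ← WithTop.coe_add]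
          congr 1
        rw [hterm, WithTop.coe_lt_coe]
        have hcross := hα i hir
        rw [← hA, ← hB, ← hb, ← WithTop.coe_mul, ← WithTop.coe_add, WithTop.coe_lt_coe] at hcross
        have hqpow : (q : ℤ) ^ i ≤ (q : ℤ) ^ r :=
          pow_le_pow_right₀ (by exact_mod_cast Nat.one_le_of_lt hq) hir.le
        have hmono : ((q : ℤ) ^ r - (q : ℤ) ^ i) * m ≤ ((q : ℤ) ^ r - (q : ℤ) ^ i) * A0 :=
          mul_le_mul_of_nonneg_left hm (by linarith)
        rw [ht]
        nlinarith
    rw [hf x, Finset.sum_range_succ, add_comm]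
    rw [hlt _ _ (by rw [hbig]; exact hsum _ _ _ (WithTop.coe_lt_top _) hsmall)]
    exact hbig
  -- the sequence of valuations
  set c : ℕ → ℤ := fun n => Nat.rec A0 (fun _ cn => (q : ℤ) ^ r * cn + B0) n with hc
  have hc0 : c 0 = A0 := rfl
  have hcs : ∀ n, c (n + 1) = (q : ℤ) ^ r * c n + B0 := fun n => rfl
  have hqr1 : (1 : ℤ) ≤ (q : ℤ) ^ r := one_le_pow₀ (by exact_mod_cast Nat.one_le_of_lt hq)
  have hmain : ∀ n, c n ≤ A0 ∧ v (f^[n] α) = ((c n : ℤ) : WithTop ℤ) := by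
    intro n
    induction n with
    | zero => exact ⟨le_refl _, by simpa [hc0] using hA.symm⟩
    | succ k ih =>
      obtain ⟨ih1, ih2⟩ := ih
      have hstep := hkey (c k) ih1 (f^[k] α) ih2
      rw [← Function.iterate_succ_apply' f k α] at hstep
      refine ⟨?_, by rw [hstep, hcs]⟩
      rw [hcs]
      nlinarith
  -- real computation
  set Q : ℝ := (q : ℝ) ^ r with hQ
  have hq2 : (2 : ℝ) ≤ (q : ℝ) := by exact_mod_cast hq
  have hQ2 : (2 : ℝ) ≤ Q := by
    calc (2 : ℝ) ≤ (q : ℝ) := hq2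
    _ = (q : ℝ) ^ 1 := (pow_one _).symm
    _ ≤ (q : ℝ) ^ r := pow_le_pow_right₀ (by linarith) hr
  have hQ1 : (1 : ℝ) < Q := by linarith
  have hQne : Q - 1 ≠ 0 := by linarith
  set T : ℝ := (B0 : ℝ) / (Q - 1) with hT
  have hcreal : ∀ n, ((c n : ℤ) : ℝ) = Q ^ n * ((A0 : ℝ) + T) - T := by
    intro n
    induction n with
    | zero => simp only [hc0, pow_zero]; push_cast; ring
    | succ k ih =>
      rw [hcs]
      push_cast
      rw [ih]
      have hQr : ((q : ℝ) ^ r) = Q := rfl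
      rw [hQr, pow_succ]
      have hTeq : (Q - 1) * T = (B0 : ℝ) := by
        rw [hT]; field_simp
      nlinarith [hTeq]
  constructor
  · -- convergence
    have huA : (v α).untopD 0 = A0 := by rw [← hA, WithTop.untopD_coe]
    have huB : (v (a r)).untopD 0 = B0 := by rw [← hB, WithTop.untopD_coe]
    rw [huA, huB]
    have hseq : ∀ n : ℕ,
        -(((min 0 (v (f^[n] α))).untopD 0 : ℤ) : ℝ) / (q : ℝ) ^ (n * r)
          = -((A0 : ℝ) + T) + T * (1 / Q) ^ n := by
      intro n
      obtain ⟨hle, heq⟩ := hmain n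
      have hcn0 : c n ≤ 0 := hle.trans hA0.le
      have hmin : min 0 (v (f^[n] α)) = ((c n : ℤ) : WithTop ℤ) := by
        rw [heq]
        exact min_eq_right (by exact_mod_cast hcn0)
      rw [hmin, WithTop.untopD_coe, hcreal n]
      have hQpow : (q : ℝ) ^ (n * r) = Q ^ n := by
        rw [hQ, ← pow_mul, mul_comm]
      rw [hQpow]
      have hQn : Q ^ n ≠ 0 := by positivity
      field_simp
      have hinv2 : Q ^ n * (1 / Q) ^ n = 1 := by
        rw [← mul_pow, mul_one_div_cancel (by linarith), one_pow]
      linear_combination (-T) * hinv2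
    rw [show (-((A0 : ℝ) + (B0 : ℝ) / ((q:ℝ) ^ r - 1))) = -((A0 : ℝ) + T) + T * 0 by
      rw [hT, hQ]; ring]
    apply Filter.Tendsto.congr (fun n => (hseq n).symm)
    exact Filter.Tendsto.const_add _ (Filter.Tendsto.const_mul _
      (tendsto_pow_atTop_nhds_zero_of_lt_one (by positivity)
        (by rw [div_lt_one (by linarith)]; linarith)))
  · -- the bound
    have huA : (v α).untopD 0 = A0 := by rw [← hA, WithTop.untopD_coe]
    have huB : (v (a r)).untopD 0 = B0 := by rw [← hB, WithTop.untopD_coe]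
    rw [huA, huB]
    have hA1 : (A0 : ℝ) ≤ -1 := by
      have h : A0 ≤ -1 := by omega
      exact_mod_cast h
    have hB1 : (B0 : ℝ) ≤ 0 := by exact_mod_cast hB0
    have hdiv : (B0 : ℝ) / ((q : ℝ) ^ r - 1) ≤ 0 :=
      div_nonpos_of_nonpos_of_nonneg hB1 (by linarith)
    linarith
end

section
/- Let G be an abelian group and h: G → ℝ a nonnegative function satisfying the parallelogram law h(x + y) + h(x − y) = 2h(x) + 2h(y) for all x, y ∈ G. Then for every integer N ≥ 1 and all points P_0, P_1, …, P_N ∈ G, one has max_{0 ≤ i ≤ N} h(P_i) ≥ (1/(4N(N+1))) · Σ_{i ≠ l} h(P_i − P_l), where the sum ranges over all ordered pairs (i, l) with 0 ≤ i, l ≤ N and i ≠ l. -/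
/-- If `h : G → ℝ` is a nonnegative function on an abelian group satisfying the parallelogram
law, then for any points `P₀, …, P_N` (`N ≥ 1`),
`max_i h(Pᵢ) ≥ (1/(4N(N+1))) ∑_{i ≠ l} h(Pᵢ − P_l)`, the sum being over ordered pairs. -/
theorem max_height_ge_sum_of_differences {G : Type*} [AddCommGroup G] (h : G → ℝ)
    (h_nonneg : ∀ x, 0 ≤ h x)
    (h_parallelogram : ∀ x y, h (x + y) + h (x - y) = 2 * h x + 2 * h y)
    (N : ℕ) (hN : 1 ≤ N) (P : Fin (N + 1) → G) :
    (1 / (4 * N * (N + 1)) : ℝ) *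
        ∑ i : Fin (N + 1), ∑ l : Fin (N + 1), (if i ≠ l then h (P i - P l) else 0) ≤
      Finset.univ.sup' Finset.univ_nonempty (fun i => h (P i)) := by
  set M := Finset.univ.sup' Finset.univ_nonempty (fun i => h (P i)) with hM
  have hle : ∀ i, h (P i) ≤ M := fun i => Finset.le_sup' (fun i => h (P i)) (Finset.mem_univ i)
  have hMnn : 0 ≤ M := le_trans (h_nonneg (P 0)) (hle 0)
  have key : ∀ x y, h (x - y) ≤ 2 * h x + 2 * h y := by
    intro x y
    have := h_parallelogram x y
    nlinarith [h_nonneg (x + y)]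
  have hterm : ∀ i l : Fin (N + 1),
      (if i ≠ l then h (P i - P l) else 0) ≤ (if i ≠ l then 4 * M else 0) := by
    intro i l
    split
    · exact le_trans (key _ _) (by nlinarith [hle i, hle l])
    · exact le_refl 0
  have hrow : ∀ i : Fin (N + 1),
      ∑ l : Fin (N + 1), (if i ≠ l then (4 * M : ℝ) else 0) = N * (4 * M) := by
    intro i
    rw [Finset.sum_ite, Finset.sum_const, Finset.sum_const, smul_zero, add_zero,
      Finset.filter_ne, Finset.card_erase_of_mem (Finset.mem_univ i), Finset.card_univ,
      Fintype.card_fin]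
    simp [nsmul_eq_mul]
  have hsum : (∑ i : Fin (N + 1), ∑ l : Fin (N + 1), (if i ≠ l then h (P i - P l) else 0))
      ≤ 4 * N * (N + 1) * M := by
    calc ∑ i : Fin (N + 1), ∑ l : Fin (N + 1), (if i ≠ l then h (P i - P l) else 0)
        ≤ ∑ i : Fin (N + 1), ∑ l : Fin (N + 1), (if i ≠ l then (4 * M : ℝ) else 0) := by
          apply Finset.sum_le_sum; intro i _
          exact Finset.sum_le_sum fun l _ => hterm i l
      _ = ∑ i : Fin (N + 1), (N : ℝ) * (4 * M) := by
          exact Finset.sum_congr rfl fun i _ => hrow i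
      _ = (N + 1 : ℝ) * ((N : ℝ) * (4 * M)) := by
          rw [Finset.sum_const, Finset.card_univ, Fintype.card_fin, nsmul_eq_mul]
          push_cast; ring
      _ = 4 * N * (N + 1) * M := by ring
  have hc : (0 : ℝ) < 4 * N * (N + 1) := by
    have : (1 : ℝ) ≤ N := by exact_mod_cast hN
    nlinarith
  rw [div_mul_eq_mul_div, one_mul, div_le_iff₀ hc]
  nlinarith [hsum]
end
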